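/- Let Z --l--> M --m--> L --n--> Z[1] be a distinguished triangle in C, and suppose given direct sum decompositions L = L1 ⊕ L2 and Z[1] = Z1' ⊕ Z2' with respect to which n = diag(n11, n22), where n11 : L1 -> Z1' is an isomorphism and n22 : L2 -> Z2' belongs to radHom(L2, Z2'). Then the stabilizer {b in Aut(L) : mb = m} of m under right composition by automorphisms of L has cardinality |nHom(Z[1],L)| · |Aut(L1)| / |End(L1)|, where nHom(Z[1],L) := {b in End(L) : b = nt for some t : Z[1] -> L}. -/

import Mathlib

open CategoryTheory CategoryTheory.Limits CategoryTheory.Pretriangulated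

universe v u

def radHom {C : Type u} [CategoryTheory.Category.{v} C] [Preadditive C] [HasBinaryBiproducts C]
    (X Y : C) : Set (X ⟶ Y) :=
  {f | ∀ (A : C), Indecomposable A → ∀ (g : A ⟶ X) (h : Y ⟶ A), ¬ IsIso (g ≫ f ≫ h)}

section Aux

variable {C : Type u} [CategoryTheory.Category.{v} C] [Preadditive C] [HasBinaryBiproducts C]

lemma radHom_comp_left {X Y X' : C} {f : X ⟶ Y} (hf : f ∈ radHom X Y) (g : X' ⟶ X) :
    g ≫ f ∈ radHom X' Y := fun A hA u v h =>
  hf A hA (u ≫ g) v (by simpa only [Category.assoc] using h)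

lemma radHom_comp_right {X Y Y' : C} {f : X ⟶ Y} (hf : f ∈ radHom X Y) (g : Y ⟶ Y') :
    f ≫ g ∈ radHom X Y' := fun A hA u v h =>
  hf A hA u (g ≫ v) (by simpa only [Category.assoc] using h)

lemma isIso_neg_iff {X Y : C} (x : X ⟶ Y) : IsIso (-x) ↔ IsIso x := by
  have key : ∀ (y : X ⟶ Y), IsIso y → IsIso (-y) := by
    intro y hy
    exact ⟨⟨-(inv y), by simp, by simp⟩⟩
  constructor
  · intro h
    have := key _ h
    rwa [neg_neg] at this
  · exact key x

lemma radHom_neg {X Y : C} {f : X ⟶ Y} (hf : f ∈ radHom X Y) : -f ∈ radHom X Y := by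
  intro A hA u v h
  refine hf A hA u v ?_
  rw [← isIso_neg_iff]
  simpa using h

lemma radHom_add
    (hloc : ∀ X : C, Indecomposable X → IsLocalRing (CategoryTheory.End X))
    {X Y : C} {f g : X ⟶ Y} (hf : f ∈ radHom X Y) (hg : g ∈ radHom X Y) :
    f + g ∈ radHom X Y := by
  intro A hA u v h
  haveI := hloc A hA
  have h' : IsIso ((u ≫ f ≫ v) + (u ≫ g ≫ v)) := by
    simpa only [Preadditive.comp_add, Preadditive.add_comp, Category.assoc] using h
  set α : CategoryTheory.End A := u ≫ f ≫ v with hα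
  set β : CategoryTheory.End A := u ≫ g ≫ v with hβ
  have hu : IsUnit (α + β) := (isUnit_iff_isIso (α + β)).2 h'
  obtain ⟨w, hw⟩ := hu
  have h1 : α * ↑w⁻¹ + β * ↑w⁻¹ = 1 := by
    rw [← add_mul, ← hw]; exact w.mul_inv
  rcases IsLocalRing.isUnit_or_isUnit_of_add_one (R := CategoryTheory.End A) h1 with hc | hc
  · have hα' : IsUnit α := by
      have h2 := hc.mul w.isUnit
      rwa [mul_assoc, Units.inv_mul, mul_one] at h2
    exact hf A hA u v ((isUnit_iff_isIso α).1 hα')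
  · have hβ' : IsUnit β := by
      have h2 := hc.mul w.isUnit
      rwa [mul_assoc, Units.inv_mul, mul_one] at h2
    exact hg A hA u v ((isUnit_iff_isIso β).1 hβ')

lemma radHom_sub
    (hloc : ∀ X : C, Indecomposable X → IsLocalRing (CategoryTheory.End X))
    {X Y : C} {f g : X ⟶ Y} (hf : f ∈ radHom X Y) (hg : g ∈ radHom X Y) :
    f - g ∈ radHom X Y := by
  rw [sub_eq_add_neg]
  exact radHom_add hloc hf (radHom_neg hg)

end Aux
section Gauss

variable {C : Type u} [CategoryTheory.Category.{v} C] [Preadditive C] [HasBinaryBiproducts C]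

lemma isIso_one_sub_fst_inr {A B : C} (y : A ⟶ B) :
    IsIso (𝟙 (A ⊞ B) - biprod.fst ≫ y ≫ biprod.inr) := by
  refine ⟨⟨𝟙 (A ⊞ B) + biprod.fst ≫ y ≫ biprod.inr, ?_, ?_⟩⟩ <;>
  · simp only [Preadditive.sub_comp, Preadditive.comp_add, Preadditive.add_comp,
      Preadditive.comp_sub, Category.id_comp, Category.comp_id, Category.assoc,
      biprod.inr_fst_assoc, zero_comp, comp_zero]
    abel

lemma isIso_one_sub_snd_inl {A B : C} (y : B ⟶ A) :
    IsIso (𝟙 (A ⊞ B) - biprod.snd ≫ y ≫ biprod.inl) := by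
  refine ⟨⟨𝟙 (A ⊞ B) + biprod.snd ≫ y ≫ biprod.inl, ?_, ?_⟩⟩ <;>
  · simp only [Preadditive.sub_comp, Preadditive.comp_add, Preadditive.add_comp,
      Preadditive.comp_sub, Category.id_comp, Category.comp_id, Category.assoc,
      biprod.inl_snd_assoc, zero_comp, comp_zero]
    abel

lemma isIso_biprod_map_iff {A B A' B' : C} (e : A ⟶ A') (d : B ⟶ B') [IsIso d] :
    IsIso (biprod.map e d) ↔ IsIso e := by
  constructor
  · intro h
    exact isIso_left_of_isIso_biprod_map e d
  · intro h
    exact ⟨⟨biprod.map (inv e) (inv d), by ext <;> simp, by ext <;> simp⟩⟩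

lemma gauss22 {A B A' B' : C} (a : A ⟶ A') (b : A ⟶ B') (c : B ⟶ A') (d : B ⟶ B') [IsIso d] :
    IsIso (biprod.desc (biprod.lift a b) (biprod.lift c d)) ↔
      IsIso (a - b ≫ inv d ≫ c) := by
  set F := biprod.desc (biprod.lift a b) (biprod.lift c d) with hF
  set U := 𝟙 (A ⊞ B) - biprod.fst ≫ (b ≫ inv d) ≫ biprod.inr with hU
  set V := 𝟙 (A' ⊞ B') - biprod.snd ≫ (inv d ≫ c) ≫ biprod.inl with hV
  haveI hUi : IsIso U := isIso_one_sub_fst_inr _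
  haveI hVi : IsIso V := isIso_one_sub_snd_inl _
  have key : U ≫ F ≫ V = biprod.map (a - b ≫ inv d ≫ c) d := by
    ext
    · simp [hF, hU, hV, Preadditive.sub_comp, Preadditive.comp_sub, Category.assoc]
    · simp [hF, hU, hV, Preadditive.sub_comp, Preadditive.comp_sub, Category.assoc]
    · simp [hF, hU, hV, Preadditive.sub_comp, Preadditive.comp_sub, Category.assoc]
    · simp [hF, hU, hV, Preadditive.sub_comp, Preadditive.comp_sub, Category.assoc]
  constructor
  · intro h
    haveI : IsIso (biprod.map (a - b ≫ inv d ≫ c) d) := by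
      rw [← key]; infer_instance
    exact (isIso_biprod_map_iff _ d).1 this
  · intro h
    haveI : IsIso (biprod.map (a - b ≫ inv d ≫ c) d) := (isIso_biprod_map_iff _ d).2 h
    have hF' : F = inv U ≫ (U ≫ F ≫ V) ≫ inv V := by simp
    rw [hF', key]
    infer_instance

lemma hom_eq_matrix {A B A' B' : C} (f : A ⊞ B ⟶ A' ⊞ B') :
    f = biprod.desc (biprod.lift (biprod.inl ≫ f ≫ biprod.fst) (biprod.inl ≫ f ≫ biprod.snd))
      (biprod.lift (biprod.inr ≫ f ≫ biprod.fst) (biprod.inr ≫ f ≫ biprod.snd)) := by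
  ext <;> simp

lemma isIso_conj_iff {X Y : C} (e : X ≅ Y) (f : Y ⟶ Y) :
    IsIso (e.hom ≫ f ≫ e.inv) ↔ IsIso f := by
  constructor
  · intro h
    have : f = e.inv ≫ (e.hom ≫ f ≫ e.inv) ≫ e.hom := by simp
    rw [this]; infer_instance
  · intro h; infer_instance

end Gauss
section LinAux

variable {k : Type*} [Field k]
variable {C : Type u} [CategoryTheory.Category.{v} C] [Preadditive C] [CategoryTheory.Linear k C]
  [HasBinaryBiproducts C]

/-- Conjugation by isomorphisms as a linear equivalence on hom spaces. -/
noncomputable def homCongr' (X Y : C) {X' Y' : C} (e : X ≅ X') (e' : Y ≅ Y') :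
    (X ⟶ Y) ≃ₗ[k] (X' ⟶ Y') where
  toFun f := e.inv ≫ f ≫ e'.hom
  invFun g := e.hom ≫ g ≫ e'.inv
  map_add' f g := by simp [Preadditive.comp_add, Preadditive.add_comp]
  map_smul' r f := by simp [CategoryTheory.Linear.comp_smul, CategoryTheory.Linear.smul_comp]
  left_inv f := by simp
  right_inv g := by simp

/-- Splitting of hom into a biproduct target. -/
noncomputable def biprodHomTo (W A B : C) : (W ⟶ A ⊞ B) ≃ₗ[k] (W ⟶ A) × (W ⟶ B) where
  toFun f := (f ≫ biprod.fst, f ≫ biprod.snd)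
  invFun p := biprod.lift p.1 p.2
  map_add' f g := by simp [Preadditive.add_comp]
  map_smul' r f := by simp [CategoryTheory.Linear.smul_comp]
  left_inv f := by apply biprod.hom_ext <;> simp
  right_inv p := by simp

/-- Splitting of hom out of a biproduct source. -/
noncomputable def biprodHomFrom (A B W : C) : (A ⊞ B ⟶ W) ≃ₗ[k] (A ⟶ W) × (B ⟶ W) where
  toFun f := (biprod.inl ≫ f, biprod.inr ≫ f)
  invFun p := biprod.desc p.1 p.2
  map_add' f g := by simp [Preadditive.comp_add]
  map_smul' r f := by simp [CategoryTheory.Linear.comp_smul]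
  left_inv f := by apply biprod.hom_ext' <;> simp
  right_inv p := by simp

variable [∀ X Y : C, FiniteDimensional k (X ⟶ Y)]

lemma finrank_end_biprod (A B : C) :
    Module.finrank k (A ⊞ B ⟶ A ⊞ B) =
      Module.finrank k (A ⟶ A) + Module.finrank k (A ⟶ B) +
        Module.finrank k (B ⟶ A) + Module.finrank k (B ⟶ B) := by
  rw [(biprodHomFrom (k := k) A B (A ⊞ B)).finrank_eq]
  rw [Module.finrank_prod]
  rw [(biprodHomTo (k := k) A (A := A) (B := B)).finrank_eq,
    (biprodHomTo (k := k) B (A := A) (B := B)).finrank_eq]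
  rw [Module.finrank_prod, Module.finrank_prod]
  ring

end LinAux
section RadIso

variable {C : Type u} [CategoryTheory.Category.{v} C] [Preadditive C] [HasBinaryBiproducts C]

lemma isIso_one_add_radHom_aux (k : Type*) [Field k] [CategoryTheory.Linear k C]
    [∀ X Y : C, FiniteDimensional k (X ⟶ Y)]
    (hloc : ∀ X : C, Indecomposable X → IsLocalRing (CategoryTheory.End X)) :
    ∀ (N : ℕ) (X : C), Module.finrank k (X ⟶ X) ≤ N →
      ∀ r ∈ radHom X X, IsIso (𝟙 X + r) := by
  intro N
  induction N with
  | zero =>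
    intro X hX r _
    have h0 : Module.finrank k (X ⟶ X) = 0 := le_antisymm hX (Nat.zero_le _)
    have hsub : Subsingleton (X ⟶ X) := Module.finrank_zero_iff.mp h0
    rw [Subsingleton.elim (𝟙 X + r) (𝟙 X)]
    infer_instance
  | succ N ih =>
    intro X hX r hr
    by_cases hsub : Subsingleton (X ⟶ X)
    · rw [Subsingleton.elim (𝟙 X + r) (𝟙 X)]; infer_instance
    by_cases hind : Indecomposable X
    · haveI := hloc X hind
      set rE : CategoryTheory.End X := r with hrE
      have hru : ¬ IsUnit rE := by
        intro hu
        exact hr X hind (𝟙 X) (𝟙 X) (by simpa using (isUnit_iff_isIso rE).1 hu)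
      have h1 : ((1 : CategoryTheory.End X) + rE) + (-rE) = 1 := by abel
      rcases IsLocalRing.isUnit_or_isUnit_of_add_one
        (R := CategoryTheory.End X) h1 with hc | hc
      · exact (isUnit_iff_isIso ((1 : CategoryTheory.End X) + rE)).1 hc
      · exact absurd (by simpa using hc.neg) hru
    · have hnz : ¬ IsZero X := fun h => hsub ⟨fun f g => h.eq_of_src f g⟩
      have hind' : ¬ (¬IsZero X ∧ ∀ Y Z : C, (X ≅ Y ⊞ Z) → IsZero Y ∨ IsZero Z) := hind
      rcases not_and_or.mp hind' with h | h
      · exact absurd (not_not.mp h) hnz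
      · push_neg at h
        obtain ⟨A, B, e, hA0, hB0⟩ := h
        haveI hAn : Nontrivial (A ⟶ A) :=
          ⟨⟨𝟙 A, 0, fun h0 => hA0 ((IsZero.iff_id_eq_zero A).mpr h0)⟩⟩
        haveI hBn : Nontrivial (B ⟶ B) :=
          ⟨⟨𝟙 B, 0, fun h0 => hB0 ((IsZero.iff_id_eq_zero B).mpr h0)⟩⟩
        have hfr : Module.finrank k (X ⟶ X) = Module.finrank k (A ⊞ B ⟶ A ⊞ B) :=
          (homCongr' (k := k) X X e e).finrank_eq
        rw [finrank_end_biprod] at hfr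
        have hposA : 0 < Module.finrank k (A ⟶ A) := Module.finrank_pos
        have hposB : 0 < Module.finrank k (B ⟶ B) := Module.finrank_pos
        have hA : Module.finrank k (A ⟶ A) ≤ N := by omega
        have hB : Module.finrank k (B ⟶ B) ≤ N := by omega
        set r' : A ⊞ B ⟶ A ⊞ B := e.inv ≫ r ≫ e.hom with hr'def
        have hr'rad : r' ∈ radHom (A ⊞ B) (A ⊞ B) := by
          simpa only [Category.assoc] using
            radHom_comp_right (radHom_comp_left hr e.inv) e.hom
        have hconj : 𝟙 X + r = e.hom ≫ (𝟙 (A ⊞ B) + r') ≫ e.inv := by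
          simp [hr'def, Preadditive.comp_add, Preadditive.add_comp]
        rw [hconj, isIso_conj_iff]
        have ca : biprod.inl ≫ (𝟙 (A ⊞ B) + r') ≫ biprod.fst
            = 𝟙 A + biprod.inl ≫ r' ≫ biprod.fst := by
          simp [Preadditive.comp_add, Preadditive.add_comp]
        have cb : biprod.inl ≫ (𝟙 (A ⊞ B) + r') ≫ biprod.snd
            = biprod.inl ≫ r' ≫ biprod.snd := by
          simp [Preadditive.comp_add, Preadditive.add_comp]
        have cc : biprod.inr ≫ (𝟙 (A ⊞ B) + r') ≫ biprod.fst
            = biprod.inr ≫ r' ≫ biprod.fst := by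
          simp [Preadditive.comp_add, Preadditive.add_comp]
        have cd : biprod.inr ≫ (𝟙 (A ⊞ B) + r') ≫ biprod.snd
            = 𝟙 B + biprod.inr ≫ r' ≫ biprod.snd := by
          simp [Preadditive.comp_add, Preadditive.add_comp]
        rw [hom_eq_matrix (𝟙 (A ⊞ B) + r'), ca, cb, cc, cd]
        haveI hd : IsIso (𝟙 B + biprod.inr ≫ r' ≫ biprod.snd) :=
          ih B hB _ (by simpa only [Category.assoc] using
            radHom_comp_right (radHom_comp_left hr'rad biprod.inr) biprod.snd)
        rw [gauss22]
        have rearr : (𝟙 A + biprod.inl ≫ r' ≫ biprod.fst) -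
            (biprod.inl ≫ r' ≫ biprod.snd) ≫ inv (𝟙 B + biprod.inr ≫ r' ≫ biprod.snd) ≫
              (biprod.inr ≫ r' ≫ biprod.fst)
            = 𝟙 A + ((biprod.inl ≫ r' ≫ biprod.fst) -
              (biprod.inl ≫ r' ≫ biprod.snd) ≫ inv (𝟙 B + biprod.inr ≫ r' ≫ biprod.snd) ≫
                (biprod.inr ≫ r' ≫ biprod.fst)) := by abel
        rw [rearr]
        refine ih A hA _ (radHom_sub hloc ?_ ?_)
        · simpa only [Category.assoc] using
            radHom_comp_right (radHom_comp_left hr'rad biprod.inl) biprod.fst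
        · have hcrad : biprod.inr ≫ r' ≫ biprod.fst ∈ radHom B A := by
            simpa only [Category.assoc] using
              radHom_comp_right (radHom_comp_left hr'rad biprod.inr) biprod.fst
          exact radHom_comp_left
            (radHom_comp_left hcrad (inv (𝟙 B + biprod.inr ≫ r' ≫ biprod.snd)))
            (biprod.inl ≫ r' ≫ biprod.snd)

lemma isIso_one_add_radHom (k : Type*) [Field k] [CategoryTheory.Linear k C]
    [∀ X Y : C, FiniteDimensional k (X ⟶ Y)]
    (hloc : ∀ X : C, Indecomposable X → IsLocalRing (CategoryTheory.End X))
    {X : C} {r : X ⟶ X} (hr : r ∈ radHom X X) : IsIso (𝟙 X + r) :=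
  isIso_one_add_radHom_aux k hloc (Module.finrank k (X ⟶ X)) X le_rfl r hr

lemma isIso_add_radHom_iff (k : Type*) [Field k] [CategoryTheory.Linear k C]
    [∀ X Y : C, FiniteDimensional k (X ⟶ Y)]
    (hloc : ∀ X : C, Indecomposable X → IsLocalRing (CategoryTheory.End X))
    {X Y : C} (a : X ⟶ Y) {r : X ⟶ Y} (hr : r ∈ radHom X Y) :
    IsIso (a + r) ↔ IsIso a := by
  have key : ∀ (b : X ⟶ Y) (s : X ⟶ Y), s ∈ radHom X Y → IsIso b → IsIso (b + s) := by
    intro b s hs hb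
    haveI := hb
    have : b + s = b ≫ (𝟙 Y + inv b ≫ s) := by
      simp [Preadditive.comp_add]
    rw [this]
    haveI : IsIso (𝟙 Y + inv b ≫ s) :=
      isIso_one_add_radHom k hloc (radHom_comp_left hs (inv b))
    infer_instance
  constructor
  · intro h
    have : a = (a + r) + (-r) := by abel
    rw [this]
    exact key _ _ (radHom_neg hr) h
  · intro h
    exact key _ _ hr h

end RadIso
section Count

variable {k : Type*} [Field k] {V W : Type*} [AddCommGroup V] [Module k V]
  [AddCommGroup W] [Module k W]

lemma card_comp_pred (f : V →ₗ[k] W) (hf : Function.Surjective f) (P : W → Prop) :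
    Nat.card {v : V // P (f v)} = Nat.card (LinearMap.ker f) * Nat.card {w : W // P w} := by
  obtain ⟨g, hg⟩ := f.exists_rightInverse_of_surjective (LinearMap.range_eq_top.2 hf)
  have hgf : ∀ w, f (g w) = w := fun w => DFunLike.congr_fun hg w
  have E : {v : V // P (f v)} ≃ {w : W // P w} × (LinearMap.ker f) :=
  { toFun := fun v => (⟨f v.1, v.2⟩, ⟨v.1 - g (f v.1), by
      simp [LinearMap.mem_ker, map_sub, hgf]⟩)
    invFun := fun p => ⟨g p.1.1 + p.2.1, by
      have h2 := p.2.2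
      rw [LinearMap.mem_ker] at h2
      have h3 : f (g p.1.1 + p.2.1) = p.1.1 := by simp [map_add, hgf, h2]
      rw [h3]; exact p.1.2⟩
    left_inv := fun v => by
      ext
      simp
    right_inv := fun p => by
      have h2 := p.2.2
      rw [LinearMap.mem_ker] at h2
      refine Prod.ext ?_ ?_ <;> ext <;> simp [map_add, hgf, h2] }
  rw [Nat.card_congr E, Nat.card_prod, mul_comm]

end Count
set_option maxHeartbeats 1000000 in
theorem stmt4 {k : Type*} [Field k] [Finite k]
    {C : Type u} [CategoryTheory.Category.{v} C] [Preadditive C] [CategoryTheory.Linear k C]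
    [HasZeroObject C] [HasBinaryBiproducts C] [HasShift C ℤ]
    [∀ i : ℤ, (CategoryTheory.shiftFunctor C i).Additive] [Pretriangulated C]
    [∀ X Y : C, FiniteDimensional k (X ⟶ Y)]
    (hloc : ∀ X : C, Indecomposable X → IsLocalRing (CategoryTheory.End X))
    {Z M L L₁ L₂ Z₁' Z₂' : C} (l : Z ⟶ M) (m : M ⟶ L) (n : L ⟶ Z⟦(1 : ℤ)⟧)
    (hT : Triangle.mk l m n ∈ distTriang C)
    (eL : L ≅ L₁ ⊞ L₂) (eZ : Z⟦(1 : ℤ)⟧ ≅ Z₁' ⊞ Z₂')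
    (n₁₁ : L₁ ⟶ Z₁') (n₂₂ : L₂ ⟶ Z₂')
    (hn : n = eL.hom ≫ biprod.map n₁₁ n₂₂ ≫ eZ.inv)
    (h₁₁ : IsIso n₁₁) (h₂₂ : n₂₂ ∈ radHom L₂ Z₂') :
    (Nat.card {b : Aut L // m ≫ b.hom = m} : ℚ) =
      Nat.card {b : L ⟶ L // ∃ t : Z⟦(1 : ℤ)⟧ ⟶ L, b = n ≫ t} *
        Nat.card (Aut L₁) / Nat.card (CategoryTheory.End L₁) := by
  classical
  haveI hfin : ∀ X Y : C, Finite (X ⟶ Y) := fun X Y => Module.finite_of_finite k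
  -- the two linear maps
  set Φ : (Z⟦(1 : ℤ)⟧ ⟶ L) →ₗ[k] (L ⟶ L) :=
  { toFun := fun t => n ≫ t
    map_add' := fun s t => by simp [Preadditive.comp_add]
    map_smul' := fun r t => by simp [CategoryTheory.Linear.comp_smul] } with hΦ
  set ρ : (Z⟦(1 : ℤ)⟧ ⟶ L) →ₗ[k] (L₁ ⟶ L₁) :=
  { toFun := fun t => n₁₁ ≫ biprod.inl ≫ eZ.inv ≫ t ≫ eL.hom ≫ biprod.fst
    map_add' := fun s t => by
      simp [Preadditive.comp_add, Preadditive.add_comp]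
    map_smul' := fun r t => by
      simp [CategoryTheory.Linear.comp_smul, CategoryTheory.Linear.smul_comp] } with hρ
  have hρsurj : Function.Surjective ρ := by
    intro a
    refine ⟨eZ.hom ≫ biprod.fst ≫ inv n₁₁ ≫ a ≫ biprod.inl ≫ eL.inv, ?_⟩
    simp [hρ]
  -- Claim C
  have claimC : ∀ t : (Z⟦(1 : ℤ)⟧ ⟶ L), IsIso (𝟙 L + Φ t) ↔ IsIso (𝟙 L₁ + ρ t) := by
    intro t
    set s : Z₁' ⊞ Z₂' ⟶ L₁ ⊞ L₂ := eZ.inv ≫ t ≫ eL.hom with hs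
    have hconj : 𝟙 L + Φ t
        = eL.hom ≫ (𝟙 (L₁ ⊞ L₂) + biprod.map n₁₁ n₂₂ ≫ s) ≫ eL.inv := by
      simp [hΦ, hn, hs, Preadditive.comp_add, Preadditive.add_comp]
    rw [hconj, isIso_conj_iff]
    have ca : biprod.inl ≫ (𝟙 (L₁ ⊞ L₂) + biprod.map n₁₁ n₂₂ ≫ s) ≫ biprod.fst
        = 𝟙 L₁ + n₁₁ ≫ biprod.inl ≫ s ≫ biprod.fst := by
      simp [Preadditive.comp_add, Preadditive.add_comp]
    have cb : biprod.inl ≫ (𝟙 (L₁ ⊞ L₂) + biprod.map n₁₁ n₂₂ ≫ s) ≫ biprod.snd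
        = n₁₁ ≫ biprod.inl ≫ s ≫ biprod.snd := by
      simp [Preadditive.comp_add, Preadditive.add_comp]
    have cc : biprod.inr ≫ (𝟙 (L₁ ⊞ L₂) + biprod.map n₁₁ n₂₂ ≫ s) ≫ biprod.fst
        = n₂₂ ≫ biprod.inr ≫ s ≫ biprod.fst := by
      simp [Preadditive.comp_add, Preadditive.add_comp]
    have cd : biprod.inr ≫ (𝟙 (L₁ ⊞ L₂) + biprod.map n₁₁ n₂₂ ≫ s) ≫ biprod.snd
        = 𝟙 L₂ + n₂₂ ≫ biprod.inr ≫ s ≫ biprod.snd := by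
      simp [Preadditive.comp_add, Preadditive.add_comp]
    rw [hom_eq_matrix (𝟙 (L₁ ⊞ L₂) + biprod.map n₁₁ n₂₂ ≫ s), ca, cb, cc, cd]
    haveI hd : IsIso (𝟙 L₂ + n₂₂ ≫ biprod.inr ≫ s ≫ biprod.snd) :=
      isIso_one_add_radHom k hloc (radHom_comp_right h₂₂ _)
    rw [gauss22]
    have hcrad : n₂₂ ≫ biprod.inr ≫ s ≫ biprod.fst ∈ radHom L₂ L₁ :=
      radHom_comp_right h₂₂ _
    have hrad : -((n₁₁ ≫ biprod.inl ≫ s ≫ biprod.snd) ≫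
        inv (𝟙 L₂ + n₂₂ ≫ biprod.inr ≫ s ≫ biprod.snd) ≫
          (n₂₂ ≫ biprod.inr ≫ s ≫ biprod.fst)) ∈ radHom L₁ L₁ :=
      radHom_neg (radHom_comp_left (radHom_comp_left hcrad _) _)
    rw [sub_eq_add_neg, isIso_add_radHom_iff k hloc _ hrad]
    have hρt : ρ t = n₁₁ ≫ biprod.inl ≫ s ≫ biprod.fst := by
      simp [hρ, hs]
    rw [hρt]
  -- Equivalences between the stabilizer and a radical-shifted set
  have E1 : {b : Aut L // m ≫ b.hom = m} ≃ {b : L ⟶ L // IsIso b ∧ m ≫ b = m} :=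
  { toFun := fun φ => ⟨φ.1.hom, ⟨Iso.isIso_hom (φ.1 : L ≅ L), φ.2⟩⟩
    invFun := fun ψ => ⟨@asIso _ _ _ _ ψ.1 ψ.2.1, ψ.2.2⟩
    left_inv := fun φ => by
      apply Subtype.ext
      apply Iso.ext
      rfl
    right_inv := fun ψ => Subtype.ext rfl }
  have hmn : m ≫ n = 0 := comp_distTriang_mor_zero₂₃ _ hT
  have E2 : {b : L ⟶ L // IsIso b ∧ m ≫ b = m} ≃
      {r : L ⟶ L // (∃ t : Z⟦(1 : ℤ)⟧ ⟶ L, r = n ≫ t) ∧ IsIso (𝟙 L + r)} :=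
  { toFun := fun b => ⟨b.1 - 𝟙 L, by
      constructor
      · exact Triangle.yoneda_exact₃ _ hT (b.1 - 𝟙 L)
          (by have h : m ≫ (b.1 - 𝟙 L) = 0 := by rw [Preadditive.comp_sub, b.2.2, Category.comp_id, sub_self]
              exact h)
      · have h : 𝟙 L + (b.1 - 𝟙 L) = b.1 := by abel
        rw [h]; exact b.2.1⟩
    invFun := fun r => ⟨𝟙 L + r.1, by
      refine ⟨r.2.2, ?_⟩
      obtain ⟨t, ht⟩ := r.2.1
      have h0 : m ≫ r.1 = 0 := by
        rw [ht, ← Category.assoc, hmn, zero_comp]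
      rw [Preadditive.comp_add, h0, add_zero, Category.comp_id]⟩
    left_inv := fun b => by
      apply Subtype.ext
      simp
    right_inv := fun r => by
      apply Subtype.ext
      simp }
  set P₁ : ↥(LinearMap.range Φ) → Prop := fun r => IsIso (𝟙 L + r.1) with hP₁
  have E3 : {r : L ⟶ L // (∃ t : Z⟦(1 : ℤ)⟧ ⟶ L, r = n ≫ t) ∧ IsIso (𝟙 L + r)} ≃
      {r : ↥(LinearMap.range Φ) // P₁ r} :=
  { toFun := fun q => ⟨⟨q.1, by obtain ⟨t, ht⟩ := q.2.1; exact ⟨t, ht.symm⟩⟩, q.2.2⟩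
    invFun := fun r => ⟨r.1.1, ⟨by obtain ⟨t, ht⟩ := r.1.2; exact ⟨t, ht.symm⟩, r.2⟩⟩
    left_inv := fun q => Subtype.ext rfl
    right_inv := fun r => Subtype.ext (Subtype.ext rfl) }
  have E6 : {a : L₁ ⟶ L₁ // IsIso (𝟙 L₁ + a)} ≃ {b : L₁ ⟶ L₁ // IsIso b} :=
    Equiv.subtypeEquiv (Equiv.addLeft (𝟙 L₁)) (fun a => Iff.rfl)
  have E7 : {b : L₁ ⟶ L₁ // IsIso b} ≃ Aut L₁ :=
  { toFun := fun b => @asIso _ _ _ _ b.1 b.2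
    invFun := fun φ => ⟨φ.hom, Iso.isIso_hom (φ : L₁ ≅ L₁)⟩
    left_inv := fun b => Subtype.ext rfl
    right_inv := fun φ => Iso.ext rfl }
  -- counting
  have hc1 := card_comp_pred Φ.rangeRestrict Φ.surjective_rangeRestrict P₁
  have hc1' := card_comp_pred Φ.rangeRestrict Φ.surjective_rangeRestrict (fun _ => True)
  have hc2 := card_comp_pred ρ hρsurj (fun a => IsIso (𝟙 L₁ + a))
  have hc2' := card_comp_pred ρ hρsurj (fun _ => True)
  have e₁ : Nat.card {b : Aut L // m ≫ b.hom = m}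
      = Nat.card {r : ↥(LinearMap.range Φ) // P₁ r} :=
    Nat.card_congr ((E1.trans E2).trans E3)
  have e₂ : Nat.card {t : Z⟦(1 : ℤ)⟧ ⟶ L // IsIso (𝟙 L + Φ t)}
      = Nat.card (LinearMap.ker Φ.rangeRestrict)
        * Nat.card {r : ↥(LinearMap.range Φ) // P₁ r} := by
    rwa [Nat.card_congr (Equiv.subtypeEquivRight
      (fun t => Iff.rfl : ∀ t, P₁ (Φ.rangeRestrict t) ↔ IsIso (𝟙 L + Φ t)))] at hc1
  have e₃ : Nat.card {t : Z⟦(1 : ℤ)⟧ ⟶ L // IsIso (𝟙 L + Φ t)}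
      = Nat.card {t : Z⟦(1 : ℤ)⟧ ⟶ L // IsIso (𝟙 L₁ + ρ t)} :=
    Nat.card_congr (Equiv.subtypeEquivRight claimC)
  have e₅ : Nat.card {a : L₁ ⟶ L₁ // IsIso (𝟙 L₁ + a)} = Nat.card (Aut L₁) :=
    Nat.card_congr (E6.trans E7)
  have e₆ : Nat.card (Z⟦(1 : ℤ)⟧ ⟶ L)
      = Nat.card (LinearMap.ker Φ.rangeRestrict) * Nat.card ↥(LinearMap.range Φ) := by
    rwa [Nat.card_congr (Equiv.subtypeUnivEquiv (fun v => trivial)),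
      Nat.card_congr (Equiv.subtypeUnivEquiv (fun w => trivial))] at hc1'
  have e₇ : Nat.card (Z⟦(1 : ℤ)⟧ ⟶ L)
      = Nat.card (LinearMap.ker ρ) * Nat.card (L₁ ⟶ L₁) := by
    rwa [Nat.card_congr (Equiv.subtypeUnivEquiv (fun v => trivial)),
      Nat.card_congr (Equiv.subtypeUnivEquiv (fun w => trivial))] at hc2'
  have e₈ : Nat.card {b : L ⟶ L // ∃ t : Z⟦(1 : ℤ)⟧ ⟶ L, b = n ≫ t}
      = Nat.card ↥(LinearMap.range Φ) :=
    Nat.card_congr (Equiv.subtypeEquivRight (fun b =>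
      ⟨fun ⟨t, ht⟩ => ⟨t, ht.symm⟩, fun ⟨t, ht⟩ => ⟨t, ht.symm⟩⟩))
  have e₉ : Nat.card (CategoryTheory.End L₁) = Nat.card (L₁ ⟶ L₁) := rfl
  -- nonvanishing
  haveI : Nonempty ↥(LinearMap.ker Φ.rangeRestrict) := ⟨0⟩
  haveI : Nonempty (L₁ ⟶ L₁) := ⟨0⟩
  have hqne : Nat.card ↥(LinearMap.ker Φ.rangeRestrict) ≠ 0 := Nat.card_pos.ne'
  have hen : Nat.card (L₁ ⟶ L₁) ≠ 0 := Nat.card_pos.ne'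
  -- final arithmetic
  rw [e₁, e₈, e₉]
  rw [eq_div_iff (by exact_mod_cast hen)]
  have h1 : (Nat.card ↥(LinearMap.ker Φ.rangeRestrict) : ℚ)
      * Nat.card {r : ↥(LinearMap.range Φ) // P₁ r}
      = Nat.card ↥(LinearMap.ker ρ) * Nat.card (Aut L₁) := by
    exact_mod_cast (e₂.symm.trans (e₃.trans (hc2.trans (by rw [e₅]))))
  have h2 : (Nat.card ↥(LinearMap.ker Φ.rangeRestrict) : ℚ)
      * Nat.card ↥(LinearMap.range Φ)
      = Nat.card ↥(LinearMap.ker ρ) * Nat.card (L₁ ⟶ L₁) := by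
    exact_mod_cast (e₆.symm.trans e₇)
  have hqQ : (Nat.card ↥(LinearMap.ker Φ.rangeRestrict) : ℚ) ≠ 0 := by
    exact_mod_cast hqne
  apply mul_left_cancel₀ hqQ
  linear_combination (Nat.card (L₁ ⟶ L₁) : ℚ) * h1 - (Nat.card (Aut L₁) : ℚ) * h2
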